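/- Fix β ∈ (1/2, 1) and let (m̄_k)_{k≥1} be a nondecreasing sequence of integers with m̄_1 ≥ 1 and m̄_{k+1} ≤ m̄_k + m̄_1 for all k. Then the series defining Θ(α,β) converges uniformly for α ∈ [1/2, β] and lim_{α→β⁻} Θ(α,β) = 0. -/

import Mathlib

open Filter Topology

/-- The auxiliary function `Θ` associated to the sequence `m̄` (with `m̄ 0 = 0`):
`Θ(α,β) = 1 - β + ∑_{k=1}^∞ ((α-1)/β)^k (α/β)^{m̄_k}`. -/
noncomputable def theta (m : ℕ → ℕ) (α β : ℝ) : ℝ :=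
  1 - β + ∑' k : ℕ, ((α - 1) / β) ^ (k + 1) * (α / β) ^ (m (k + 1))

/-- For fixed `β ∈ (1/2,1)` and a nondecreasing sequence `m̄` with `m̄_1 ≥ 1` and
`m̄_{k+1} ≤ m̄_k + m̄_1`, the series defining `Θ(·,β)` converges uniformly on `[1/2, β]`
and `Θ(α,β) → 0` as `α → β⁻`. -/
theorem stmt8 (β : ℝ) (hβ : β ∈ Set.Ioo (1 / 2 : ℝ) 1)
    (m : ℕ → ℕ) (hm0 : m 0 = 0) (hm1 : 1 ≤ m 1) (hmono : Monotone m)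
    (hsub : ∀ k : ℕ, m (k + 1) ≤ m k + m 1) :
    TendstoUniformlyOn
      (fun (N : ℕ) (α : ℝ) =>
        1 - β + ∑ k ∈ Finset.range N, ((α - 1) / β) ^ (k + 1) * (α / β) ^ (m (k + 1)))
      (fun α => theta m α β) atTop (Set.Icc (1 / 2 : ℝ) β) ∧
    Tendsto (fun α => theta m α β) (𝓝[<] β) (𝓝 0) := by
  obtain ⟨hβ1, hβ2⟩ := hβ
  have hβ0 : (0:ℝ) < β := by linarith
  set f : ℕ → ℝ → ℝ := fun k α => ((α - 1) / β) ^ (k + 1) * (α / β) ^ (m (k + 1)) with hf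
  have hr0 : (0:ℝ) ≤ 1 / (2 * β) := by positivity
  have hr1 : (1 / (2 * β) : ℝ) < 1 := by rw [div_lt_one (by linarith)]; linarith
  have hu : Summable (fun k : ℕ => (1 / (2 * β) : ℝ) ^ (k + 1)) := by
    simpa [pow_succ] using (summable_geometric_of_lt_one hr0 hr1).mul_right (1 / (2 * β))
  have hbound : ∀ (k : ℕ) (α : ℝ), α ∈ Set.Icc (1 / 2 : ℝ) β →
      ‖f k α‖ ≤ (1 / (2 * β)) ^ (k + 1) := by
    intro k α hα
    obtain ⟨ha1, ha2⟩ := hα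
    have h1 : |(α - 1) / β| ≤ 1 / (2 * β) := by
      rw [abs_div, abs_of_pos hβ0]
      have : |α - 1| ≤ 1 / 2 := abs_le.mpr ⟨by linarith, by linarith⟩
      rw [show (1 / (2 * β) : ℝ) = (1 / 2) / β by ring]
      gcongr
    have h2 : |α / β| ≤ 1 := by
      rw [abs_div, abs_of_pos hβ0, abs_of_nonneg (by linarith), div_le_one hβ0]
      exact ha2
    calc ‖f k α‖ = |(α - 1) / β| ^ (k + 1) * |α / β| ^ (m (k + 1)) := by
          rw [hf]; simp [abs_mul, abs_pow, abs_div]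
      _ ≤ (1 / (2 * β)) ^ (k + 1) * 1 ^ (m (k + 1)) := by
          gcongr <;> first | exact abs_nonneg _ | exact h1 | exact h2
      _ = (1 / (2 * β)) ^ (k + 1) := by simp
  have hUnif : TendstoUniformlyOn (fun N α => ∑ k ∈ Finset.range N, f k α)
      (fun α => ∑' k, f k α) atTop (Set.Icc (1 / 2 : ℝ) β) :=
    tendstoUniformlyOn_tsum_nat hu hbound
  have h1 : TendstoUniformlyOn
      (fun (N : ℕ) (α : ℝ) =>
        1 - β + ∑ k ∈ Finset.range N, ((α - 1) / β) ^ (k + 1) * (α / β) ^ (m (k + 1)))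
      (fun α => theta m α β) atTop (Set.Icc (1 / 2 : ℝ) β) := by
    have := ((tendsto_const_nhds : Tendsto (fun _ : ℕ => (1 - β : ℝ)) atTop (𝓝 (1 - β))).tendstoUniformlyOn_const (Set.Icc (1 / 2 : ℝ) β)).add hUnif
    simpa [theta, hf, Pi.add_def] using this
  refine ⟨h1, ?_⟩
  have hcont : ContinuousOn (fun α => theta m α β) (Set.Icc (1 / 2 : ℝ) β) := by
    apply h1.continuousOn
    refine Filter.Frequently.of_forall fun N => ?_
    apply Continuous.continuousOn
    continuity
  have hθβ : theta m β β = 0 := by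
    have hxn : ‖(β - 1) / β‖ < 1 := by
      rw [Real.norm_eq_abs, abs_div, abs_of_pos hβ0,
        abs_of_neg (by linarith : β - 1 < 0), div_lt_one hβ0]
      linarith
    have hsum : ∑' k : ℕ, ((β - 1) / β) ^ (k + 1) = β - 1 := by
      have h := tsum_geometric_of_norm_lt_one hxn
      have h2 : ∑' k : ℕ, ((β - 1) / β) ^ (k + 1)
          = ((β - 1) / β) * (1 - (β - 1) / β)⁻¹ := by
        simp_rw [pow_succ']
        rw [tsum_mul_left, h]
      rw [h2]
      have : (1 - (β - 1) / β) = 1 / β := by field_simp; ring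
      rw [this]
      field_simp
    have hββ : (β / β : ℝ) = 1 := div_self (ne_of_gt hβ0)
    simp only [theta, hββ, one_pow, mul_one, hsum]
    ring
  have hmem : β ∈ Set.Icc (1 / 2 : ℝ) β := ⟨by linarith, le_refl β⟩
  have h2 : Tendsto (fun α => theta m α β) (𝓝[Set.Icc (1 / 2 : ℝ) β] β) (𝓝 0) := by
    have := hcont β hmem
    rw [ContinuousWithinAt, hθβ] at this
    exact this
  refine h2.mono_left (nhdsWithin_le_of_mem ?_)
  exact mem_of_superset (Ioo_mem_nhdsLT_of_mem ⟨hβ1, le_refl β⟩) Set.Ioo_subset_Icc_self
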